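/- For integers m ≥ 1, n ≥ 1 and any parameter μ ∈ ℝ, the generalised Laguerre polynomials satisfy the two discrete equations: (i) T_{m,n+1}^{(μ−1)}(z) · T_{m,n−1}^{(μ+1)}(z) = T_{m+1,n}^{(μ−1)}(z) · T_{m−1,n}^{(μ+1)}(z) − (T_{m,n}^{(μ)}(z))², and (ii) T_{m,n+1}^{(μ−1)}(z) · T_{m+1,n−1}^{(μ+1)}(z) = T_{m+1,n}^{(μ−1)}(z) · T_{m,n}^{(μ+1)}(z) − T_{m+1,n}^{(μ)}(z) · T_{m,n}^{(μ)}(z). -/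

import Mathlib

noncomputable section

open Finset

/-- Generalized binomial coefficient `C(x, k)` for real `x`. -/
def genBinom (x : ℝ) (k : ℕ) : ℝ :=
  (∏ i ∈ Finset.range k, (x - i)) / (Nat.factorial k)

/-- Associated Laguerre polynomial `L_n^{(α)}(z)`, with the convention `L_n^{(α)} = 0` for `n < 0`. -/
def lagL (n : ℤ) (α : ℝ) : ℝ → ℝ := fun z =>
  if n < 0 then 0
  else ∑ k ∈ Finset.range (n.toNat + 1),
    (-1 : ℝ) ^ k * genBinom ((n : ℝ) + α) (n.toNat - k) * z ^ k / (Nat.factorial k)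

/-- Generalised Laguerre polynomial
`T_{m,n}^{(μ)}(z) = det[(d/dz)^{j+k} L_{m+n}^{(μ+1)}(z)]_{j,k=0}^{n-1}`
(with `T_{m,0}^{(μ)} = 1`, the empty determinant). -/
def genLag (m : ℤ) (n : ℕ) (μ : ℝ) : ℝ → ℝ := fun z =>
  Matrix.det (Matrix.of fun j k : Fin n =>
    iteratedDeriv ((j : ℕ) + (k : ℕ)) (lagL (m + n) (μ + 1)) z)

/-- Wronskian `Wr(f_1, …, f_r)(z) = det[(d/dz)^{j-1} f_k(z)]`. -/
def wronskian {r : ℕ} (f : Fin r → ℝ → ℝ) : ℝ → ℝ := fun z =>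
  Matrix.det (Matrix.of fun j k : Fin r => iteratedDeriv (j : ℕ) (f k) z)

/-- The constant `c_{m,n} = (-1)^{n(2m+1+n)/2} ∏_{j=1}^n (j-1)!/(m+j)!`. -/
def cmn (m n : ℕ) : ℝ :=
  (-1 : ℝ) ^ (n * (2 * m + 1 + n) / 2) *
    ∏ j ∈ Finset.range n, (Nat.factorial j : ℝ) / (Nat.factorial (m + j + 1))

/-- `τ_{m,n}^{(μ)}(z) = det[(z d/dz)^{j+k} L_{m+n}^{(n+μ)}(z)]_{j,k=0}^{n-1}`. -/
def tauP (m : ℤ) (n : ℕ) (μ : ℝ) : ℝ → ℝ := fun z =>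
  Matrix.det (Matrix.of fun j k : Fin n =>
    ((fun (g : ℝ → ℝ) => fun t => t * deriv g t)^[(j : ℕ) + (k : ℕ)]
      (lagL (m + n) ((n : ℝ) + μ))) z)

/-- Hirota bilinear operator `D_z(f • g) = f' g - f g'`. -/
def hirota (f g : ℝ → ℝ) (z : ℝ) : ℝ := deriv f z * g z - f z * deriv g z

/-- Probabilists' Hermite polynomial `He_n` as a real function. -/
def He (n : ℕ) : ℝ → ℝ := fun z => Polynomial.aeval z (Polynomial.hermite n)

/-- The fifth Painlevé equation (with `δ = -1/2`) for `w` with parameters `(a, b, c)`,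
holding at the point `z`. -/
def PV (a b c : ℝ) (w : ℝ → ℝ) (z : ℝ) : Prop :=
  iteratedDeriv 2 w z =
    (1 / (2 * w z) + 1 / (w z - 1)) * (deriv w z) ^ 2
      - (1 / z) * deriv w z
      + (w z - 1) ^ 2 * (a * (w z) ^ 2 + b) / (z ^ 2 * w z)
      + c * w z / z
      - w z * (w z + 1) / (2 * (w z - 1))

/-- The Jimbo–Miwa–Okamoto `σ`-equation `S_V` with parameters `(ν₁, ν₂, ν₃)`,
holding at the point `z`. -/
def SV (ν₁ ν₂ ν₃ : ℝ) (σ : ℝ → ℝ) (z : ℝ) : Prop :=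
  (z * iteratedDeriv 2 σ z) ^ 2 =
    (2 * (deriv σ z) ^ 2 + (ν₁ + ν₂ + ν₃ - z) * deriv σ z + σ z) ^ 2
      - 4 * deriv σ z * (deriv σ z + ν₁) * (deriv σ z + ν₂) * (deriv σ z + ν₃)


section AuxDet
set_option linter.unusedSectionVars false
open Matrix Finset

variable {R : Type*} [CommRing R]

lemma det_col_single {t : ℕ} (A : Matrix (Fin (t+1)) (Fin (t+1)) R)
    (i c : Fin (t+1)) (v : R) (h : ∀ j, A j c = if j = i then v else 0) :
    A.det = (-1)^((i:ℕ)+(c:ℕ)) * v * (A.submatrix i.succAbove c.succAbove).det := by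
  rw [det_succ_column A c, Finset.sum_eq_single i]
  · rw [h i, if_pos rfl]
  · intro b _ hb; rw [h b, if_neg hb, mul_zero, zero_mul]
  · intro h'; exact absurd (Finset.mem_univ i) h'

lemma det_one_updateColumn {n' : Type*} [DecidableEq n'] [Fintype n'] (j : n') (v : n' → R) :
    ((1 : Matrix n' n' R).updateCol j v).det = v j := by
  have := Matrix.cramer_one (α := R) (n := n')
  have h2 : Matrix.cramer (1 : Matrix n' n' R) v j = v j := by rw [this]; rfl
  rwa [Matrix.cramer_apply] at h2

lemma det_updateColumn_expand {n' : Type*} [DecidableEq n'] [Fintype n']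
    (A : Matrix n' n' R) (j : n') (v : n' → R) :
    (A.updateCol j v).det = ∑ i, v i * (A.updateCol j (Pi.single i 1)).det := by
  have key : ∀ s : Finset n',
      (A.updateCol j (fun k => ∑ i ∈ s, v i * (Pi.single i 1 : n' → R) k)).det
        = ∑ i ∈ s, v i * (A.updateCol j (Pi.single i 1)).det := by
    intro s
    induction s using Finset.induction_on with
    | empty =>
        simp only [Finset.sum_empty]
        have : (fun _ : n' => (0:R)) = (0:R) • (fun _ : n' => (0:R)) := by funext; simp
        rw [this, det_updateCol_smul, zero_mul]
    | @insert a s ha ih =>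
        rw [Finset.sum_insert ha]
        have : (fun k => ∑ i ∈ insert a s, v i * (Pi.single i 1 : n' → R) k)
            = (fun k => v a * (Pi.single a 1 : n' → R) k)
              + (fun k => ∑ i ∈ s, v i * (Pi.single i 1 : n' → R) k) := by
          funext k; simp [Finset.sum_insert ha]
        rw [this, det_updateCol_add]
        have h1 : (fun k => v a * (Pi.single a 1 : n' → R) k) = v a • (Pi.single a 1 : n' → R) := rfl
        rw [h1, det_updateCol_smul, ih]
  have hv : v = fun k => ∑ i, v i * (Pi.single i 1 : n' → R) k := by
    funext k
    simp [Pi.single_apply, eq_comm]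
  conv_lhs => rw [hv]
  exact key Finset.univ

lemma updateColumn_comm {n' : Type*} [DecidableEq n']
    (A : Matrix n' n' R) {j j' : n'} (h : j ≠ j') (u w : n' → R) :
    (A.updateCol j u).updateCol j' w = (A.updateCol j' w).updateCol j u := by
  ext a b
  simp only [Matrix.updateCol_apply]
  rcases eq_or_ne b j' with rfl | hb1
  · rw [if_pos rfl, if_neg (Ne.symm h), if_pos rfl]
  · simp [hb1]

section Desnanot
variable {F : Type*} [Field F]

variable (F) in
/-- the two-column-updated identity determinant -/
def Dval {r : ℕ} (i j : Fin (r+2)) : F :=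
  (((1 : Matrix (Fin (r+2)) (Fin (r+2)) F).updateCol 0 (Pi.single i 1)).updateCol
    (Fin.last (r+1)) (Pi.single j 1)).det

lemma last_ne_zero (r : ℕ) : (Fin.last (r+1) : Fin (r+2)) ≠ 0 := by
  simp [Fin.ext_iff]


lemma Dval_entry {r : ℕ} (i j a b : Fin (r+2)) :
    (((1 : Matrix (Fin (r+2)) (Fin (r+2)) F).updateCol 0 (Pi.single i 1)).updateCol
      (Fin.last (r+1)) (Pi.single j 1)) a b
    = if b = Fin.last (r+1) then (if a = j then 1 else 0)
      else if b = 0 then (if a = i then 1 else 0) else (if a = b then 1 else 0) := by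
  simp only [Matrix.updateCol_apply, Pi.single_apply, Matrix.one_apply]

lemma Dval_eq {r : ℕ} (i j : Fin (r+2)) :
    Dval F i j = if i = 0 ∧ j = Fin.last (r+1) then 1
      else if i = Fin.last (r+1) ∧ j = 0 then -1 else 0 := by
  set l : Fin (r+2) := Fin.last (r+1) with hl
  have h0l : (0 : Fin (r+2)) ≠ l := (last_ne_zero r).symm
  set T := (((1 : Matrix (Fin (r+2)) (Fin (r+2)) F).updateCol 0 (Pi.single i 1)).updateCol
      l (Pi.single j 1)) with hT
  have entry : ∀ a b, T a b = if b = l then (if a = j then 1 else 0)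
      else if b = 0 then (if a = i then 1 else 0) else (if a = b then 1 else 0) :=
    fun a b => Dval_entry i j a b
  rcases eq_or_ne i j with rfl | hij
  · -- equal columns 0 and l
    have : Dval F i i = 0 := by
      refine Matrix.det_zero_of_column_eq h0l fun k => ?_
      rw [show ((((1 : Matrix (Fin (r+2)) (Fin (r+2)) F).updateCol 0
        (Pi.single i 1)).updateCol l (Pi.single i 1)) = T) from rfl, entry, entry]
      simp [h0l]
    rw [this]
    have h1 : ¬ (i = 0 ∧ i = l) := by rintro ⟨rfl, h⟩; exact h0l h
    rw [if_neg h1, if_neg (by rintro ⟨rfl, h⟩; exact h0l h.symm)]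
  · rcases eq_or_ne i 0 with rfl | hi0
    · -- i = 0 : matrix is 1.updateCol l (single j 1)
      have h1 : T = (1 : Matrix (Fin (r+2)) (Fin (r+2)) F).updateCol l (Pi.single j 1) := by
        ext a b
        rw [entry, Matrix.updateCol_apply, Pi.single_apply, Matrix.one_apply]
        rcases eq_or_ne b l with rfl | hbl
        · simp
        · rw [if_neg hbl, if_neg hbl]
          rcases eq_or_ne b 0 with rfl | hb0
          · simp
          · rw [if_neg hb0]
      rw [Dval, ← hT, h1, det_one_updateColumn, Pi.single_apply]
      rcases eq_or_ne j l with rfl | hjl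
      · simp
      · rw [if_neg (Ne.symm hjl), if_neg (by rintro ⟨-, h⟩; exact hjl h),
          if_neg (by rintro ⟨h, -⟩; exact h0l h)]
    · rcases eq_or_ne j l with rfl | hjl
      · -- j = l : second update is trivial
        have h1 : T = (1 : Matrix (Fin (r+2)) (Fin (r+2)) F).updateCol 0 (Pi.single i 1) := by
          ext a b
          rw [entry, Matrix.updateCol_apply, Pi.single_apply, Matrix.one_apply]
          rcases eq_or_ne b l with rfl | hbl
          · simp [Ne.symm h0l]
          · rw [if_neg hbl]
        rw [Dval, ← hT, h1, det_one_updateColumn, Pi.single_apply]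
        rw [if_neg (fun h => hi0 h.symm), if_neg (by rintro ⟨h, -⟩; exact hi0 h),
          if_neg (by rintro ⟨-, h⟩; exact h0l h.symm)]
      · rcases eq_or_ne i l with rfl | hil
        · rcases eq_or_ne j 0 with rfl | hj0
          · -- the swap case : i = l, j = 0
            have col0 : ∀ a, T a 0 = if a = l then (1:F) else 0 := by
              intro a; rw [entry, if_neg h0l, if_pos rfl]
            have e1 := det_col_single T l 0 1 col0
            set S₁ := T.submatrix l.succAbove (0 : Fin (r+2)).succAbove with hS₁
            have collast : ∀ p : Fin (r+1), S₁ p (Fin.last r) = if p = 0 then (1:F) else 0 := by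
              intro p
              rw [hS₁, Matrix.submatrix_apply, Fin.succAbove_last, Fin.succAbove_zero,
                Fin.succ_last, entry]
              rw [if_pos rfl]
              rcases eq_or_ne p 0 with rfl | hp
              · simp
              · rw [if_neg (by simpa using hp),
                  if_neg hp]
            have e2 := det_col_single S₁ 0 (Fin.last r) 1 collast
            have eS₂ : S₁.submatrix (0 : Fin (r+1)).succAbove (Fin.last r).succAbove
                = (1 : Matrix (Fin r) (Fin r) F) := by
              ext p q
              rw [Matrix.submatrix_apply, Fin.succAbove_zero, Fin.succAbove_last, hS₁,
                Matrix.submatrix_apply, Fin.succAbove_last, Fin.succAbove_zero, entry,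
                if_neg (show ¬((q.castSucc).succ = Fin.last (r+1)) from fun h => by
                  have hq := q.isLt
                  have := congrArg Fin.val h
                  simp at this; omega),
                if_neg (show ¬((q.castSucc).succ = 0) from fun h => by
                  have := congrArg Fin.val h
                  simp at this), Matrix.one_apply]
              congr 1
              simp [Fin.ext_iff]
            rw [eS₂, Matrix.det_one, mul_one] at e2
            rw [Dval, ← hT, e1, e2]
            rw [if_neg (by rintro ⟨h, -⟩; exact h0l h.symm), if_pos ⟨rfl, rfl⟩]
            simp only [Fin.val_last, Fin.val_zero, add_zero, zero_add, mul_one]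
            rw [← pow_add]
            exact Odd.neg_one_pow ⟨r, by simp only [hl, Fin.val_last]; ring⟩
          · -- i = l, j ∉ {0, l} : column j duplicates column l
            have : Dval F l j = 0 := by
              refine Matrix.det_zero_of_column_eq (Ne.symm hjl) fun k => ?_
              rw [show ((((1 : Matrix (Fin (r+2)) (Fin (r+2)) F).updateCol 0
                (Pi.single l 1)).updateCol l (Pi.single j 1)) = T) from rfl, entry, entry]
              simp [hjl, hj0]
            rw [this, if_neg (by rintro ⟨h, -⟩; exact h0l h.symm),
              if_neg (by rintro ⟨-, h⟩; exact hj0 h)]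
        · -- i ∉ {0, l} : column i duplicates column 0
          have : Dval F i j = 0 := by
            refine Matrix.det_zero_of_column_eq (Ne.symm hi0) fun k => ?_
            rw [show ((((1 : Matrix (Fin (r+2)) (Fin (r+2)) F).updateCol 0
              (Pi.single i 1)).updateCol l (Pi.single j 1)) = T) from rfl, entry, entry]
            simp [hil, hi0, h0l, eq_comm]
          rw [this, if_neg (by rintro ⟨h, -⟩; exact hi0 h),
            if_neg (by rintro ⟨h, -⟩; exact hil h)]

end Desnanot

section DesnanotField
variable {F : Type*} [Field F]

lemma Dval_eq' {r : ℕ} (i j : Fin (r+2)) :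
    Dval F i j = (if i = 0 then (1:F) else 0) * (if j = Fin.last (r+1) then 1 else 0)
      - (if i = Fin.last (r+1) then 1 else 0) * (if j = 0 then 1 else 0) := by
  have h0l : (0 : Fin (r+2)) ≠ Fin.last (r+1) := (last_ne_zero r).symm
  rw [Dval_eq]
  split_ifs <;> simp_all <;> simp_all [eq_comm] <;> tauto

theorem desnanot_field {r : ℕ} (M : Matrix (Fin (r+2)) (Fin (r+2)) F) (hd : M.det ≠ 0) :
    M.det * (M.submatrix (fun i : Fin r => i.succ.castSucc) (fun j : Fin r => j.succ.castSucc)).det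
      = (M.submatrix Fin.succ Fin.succ).det * (M.submatrix Fin.castSucc Fin.castSucc).det
        - (M.submatrix Fin.succ Fin.castSucc).det * (M.submatrix Fin.castSucc Fin.succ).det := by
  set l : Fin (r+2) := Fin.last (r+1) with hl
  have h0l : (0 : Fin (r+2)) ≠ l := (last_ne_zero r).symm
  set c₀ : Fin (r+2) → F := fun j => M.adjugate j 0 with hc₀
  set c₁ : Fin (r+2) → F := fun j => M.adjugate j l with hc₁
  set X := ((1 : Matrix (Fin (r+2)) (Fin (r+2)) F).updateCol 0 c₀).updateCol l c₁ with hX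
  set Y := Matrix.of (fun i k : Fin (r+2) => if k = 0 then (if i = 0 then M.det else 0)
      else if k = l then (if i = l then M.det else 0) else M i k) with hY
  have hX0 : ∀ j, X j 0 = c₀ j := fun j => by
    rw [hX, Matrix.updateCol_apply, if_neg h0l, Matrix.updateCol_apply, if_pos rfl]
  have hXl : ∀ j, X j l = c₁ j := fun j => by
    rw [hX, Matrix.updateCol_apply, if_pos rfl]
  have hXm : ∀ j k, k ≠ 0 → k ≠ l → X j k = if j = k then (1:F) else 0 := fun j k h1 h2 => by
    rw [hX, Matrix.updateCol_apply, if_neg h2, Matrix.updateCol_apply, if_neg h1,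
      Matrix.one_apply]
  have hMX : M * X = Y := by
    ext i k
    rw [Matrix.mul_apply, hY]
    simp only [Matrix.of_apply]
    rcases eq_or_ne k 0 with rfl | hk0
    · rw [if_pos rfl]
      calc ∑ j, M i j * X j 0 = ∑ j, M i j * M.adjugate j 0 :=
            Finset.sum_congr rfl fun j _ => by rw [hX0 j]
        _ = (M * M.adjugate) i 0 := (Matrix.mul_apply).symm
        _ = (M.det • (1 : Matrix (Fin (r+2)) (Fin (r+2)) F)) i 0 := by rw [Matrix.mul_adjugate]
        _ = if i = 0 then M.det else 0 := by simp [Matrix.one_apply]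
    · rw [if_neg hk0]
      rcases eq_or_ne k l with rfl | hkl
      · rw [if_pos rfl]
        calc ∑ j, M i j * X j l = ∑ j, M i j * M.adjugate j l :=
              Finset.sum_congr rfl fun j _ => by rw [hXl j]
          _ = (M * M.adjugate) i l := (Matrix.mul_apply).symm
          _ = (M.det • (1 : Matrix (Fin (r+2)) (Fin (r+2)) F)) i l := by rw [Matrix.mul_adjugate]
          _ = if i = l then M.det else 0 := by
              simp only [Matrix.smul_apply, Matrix.one_apply, smul_eq_mul, mul_ite, mul_one,
                mul_zero]
      · rw [if_neg hkl]
        calc ∑ j, M i j * X j k = ∑ j, M i j * (if j = k then (1:F) else 0) :=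
              Finset.sum_congr rfl fun j _ => by rw [hXm j k hk0 hkl]
          _ = M i k := by simp [mul_ite, Finset.sum_ite_eq']
  have hdetY : Y.det = M.det * (M.det *
      (M.submatrix (fun i : Fin r => i.succ.castSucc) (fun j : Fin r => j.succ.castSucc)).det) := by
    have h1 := det_col_single Y 0 0 M.det (fun j => by simp [hY])
    have h2 := det_col_single (Y.submatrix (0 : Fin (r+2)).succAbove (0 : Fin (r+2)).succAbove)
        (Fin.last r) (Fin.last r) M.det (fun j => by
      rw [Matrix.submatrix_apply, Fin.succAbove_zero, hY]
      simp only [Matrix.of_apply]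
      rw [if_neg (Fin.succ_ne_zero _), Fin.succ_last, if_pos rfl]
      congr 1
      simp only [eq_iff_iff]
      constructor
      · intro h; exact Fin.succ_injective _ (by rw [h, Fin.succ_last])
      · intro h; rw [h, Fin.succ_last])
    have h3 : (Y.submatrix (0 : Fin (r+2)).succAbove (0 : Fin (r+2)).succAbove).submatrix
        (Fin.last r).succAbove (Fin.last r).succAbove
        = M.submatrix (fun i : Fin r => i.succ.castSucc) (fun j : Fin r => j.succ.castSucc) := by
      ext p q
      simp only [Matrix.submatrix_apply, Fin.succAbove_zero, Fin.succAbove_last, hY,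
        Matrix.of_apply]
      rw [if_neg (Fin.succ_ne_zero _), if_neg (show ¬(q.castSucc).succ = l from fun h => by
          have hq := q.isLt
          have := congrArg Fin.val h
          simp [hl] at this; omega)]
      congr 1 <;> exact Fin.ext (by simp)
    rw [h1, h2, h3]
    simp [hl]
  have hdetX : X.det = c₀ 0 * c₁ l - c₀ l * c₁ 0 := by
    have hcomm : X = ((1 : Matrix (Fin (r+2)) (Fin (r+2)) F).updateCol l c₁).updateCol 0 c₀ := by
      rw [hX]; exact updateColumn_comm _ h0l _ _
    rw [hcomm, det_updateColumn_expand]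
    have inner : ∀ i : Fin (r+2),
        (((1 : Matrix (Fin (r+2)) (Fin (r+2)) F).updateCol l c₁).updateCol 0
          (Pi.single i 1)).det
        = (if i = 0 then (1:F) else 0) * c₁ l - (if i = l then 1 else 0) * c₁ 0 := by
      intro i
      rw [← updateColumn_comm _ h0l, det_updateColumn_expand]
      calc (∑ j, c₁ j * (((1 : Matrix (Fin (r+2)) (Fin (r+2)) F).updateCol 0
              (Pi.single i 1)).updateCol l (Pi.single j 1)).det)
          = ∑ j, ((if i = 0 then (1:F) else 0) * (if j = l then c₁ j else 0)
            - (if i = l then (1:F) else 0) * (if j = 0 then c₁ j else 0)) := by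
            refine Finset.sum_congr rfl (fun j _ => ?_)
            rw [show (((1 : Matrix (Fin (r+2)) (Fin (r+2)) F).updateCol 0
              (Pi.single i 1)).updateCol l (Pi.single j 1)).det = Dval F i j from rfl,
              Dval_eq', ← hl]
            by_cases h1 : j = l
            · rw [if_pos h1, if_pos h1, if_neg (show ¬ j = 0 by rw [h1]; exact Ne.symm h0l),
                if_neg (show ¬ j = 0 by rw [h1]; exact Ne.symm h0l)]
              ring
            · by_cases h2 : j = 0
              · rw [if_neg h1, if_neg h1, if_pos h2, if_pos h2]; ring
              · rw [if_neg h1, if_neg h1, if_neg h2, if_neg h2]; ring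
        _ = (if i = 0 then (1:F) else 0) * c₁ l - (if i = l then 1 else 0) * c₁ 0 := by
            rw [Finset.sum_sub_distrib, ← Finset.mul_sum, ← Finset.mul_sum,
              Finset.sum_ite_eq' Finset.univ l c₁, Finset.sum_ite_eq' Finset.univ 0 c₁]
            simp
    calc (∑ i, c₀ i * (((1 : Matrix (Fin (r+2)) (Fin (r+2)) F).updateCol l
            c₁).updateCol 0 (Pi.single i 1)).det)
        = ∑ i, ((if i = 0 then c₀ i * c₁ l else 0) - (if i = l then c₀ i * c₁ 0 else 0)) := by
          refine Finset.sum_congr rfl (fun i _ => ?_)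
          rw [inner i]
          by_cases h1 : i = 0
          · rw [if_pos h1, if_pos h1, if_neg (show ¬ i = l by rw [h1]; exact h0l),
              if_neg (show ¬ i = l by rw [h1]; exact h0l)]
            ring
          · by_cases h2 : i = l
            · rw [if_neg h1, if_neg h1, if_pos h2, if_pos h2]; ring
            · rw [if_neg h1, if_neg h1, if_neg h2, if_neg h2]; ring
      _ = c₀ 0 * c₁ l - c₀ l * c₁ 0 := by
          rw [Finset.sum_sub_distrib, Finset.sum_ite_eq' Finset.univ (0 : Fin (r+2)),
            Finset.sum_ite_eq' Finset.univ l]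
          simp
  -- assemble
  have hcancel : X.det = M.det * (M.submatrix (fun i : Fin r => i.succ.castSucc)
      (fun j : Fin r => j.succ.castSucc)).det := by
    have := Matrix.det_mul M X
    rw [hMX, hdetY] at this
    exact mul_left_cancel₀ hd this.symm
  have hadj00 : c₀ 0 = (M.submatrix Fin.succ Fin.succ).det := by
    show M.adjugate 0 0 = _
    rw [Matrix.adjugate_fin_succ_eq_det_submatrix]
    simp [Fin.succAbove_zero]
  have hadjll : c₁ l = (M.submatrix Fin.castSucc Fin.castSucc).det := by
    show M.adjugate l l = _
    rw [Matrix.adjugate_fin_succ_eq_det_submatrix, Fin.succAbove_last]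
    rw [Even.neg_one_pow (Even.add_self _), one_mul]
  have hadjl0 : c₀ l = (-1:F)^(r+1) * (M.submatrix Fin.succ Fin.castSucc).det := by
    show M.adjugate l 0 = _
    rw [Matrix.adjugate_fin_succ_eq_det_submatrix, Fin.succAbove_zero, Fin.succAbove_last]
    simp [hl]
  have hadj0l : c₁ 0 = (-1:F)^(r+1) * (M.submatrix Fin.castSucc Fin.succ).det := by
    show M.adjugate 0 l = _
    rw [Matrix.adjugate_fin_succ_eq_det_submatrix, Fin.succAbove_zero, Fin.succAbove_last]
    simp [hl]
  rw [← hcancel, hdetX, hadj00, hadjll, hadjl0, hadj0l]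
  have hsq : ((-1:F)^(r+1)) * ((-1:F)^(r+1)) = 1 := by
    rw [← pow_add]
    exact Even.neg_one_pow ⟨r+1, by ring⟩
  linear_combination (-((M.submatrix Fin.succ Fin.castSucc).det *
    (M.submatrix Fin.castSucc Fin.succ).det)) * hsq

end DesnanotField

section DesnanotTransfer

/-- The Desnanot–Jacobi statement for a matrix. -/
def DJstmt {R : Type*} [CommRing R] {r : ℕ} (M : Matrix (Fin (r+2)) (Fin (r+2)) R) : Prop :=
  M.det * (M.submatrix (fun i : Fin r => i.succ.castSucc) (fun j : Fin r => j.succ.castSucc)).det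
    = (M.submatrix Fin.succ Fin.succ).det * (M.submatrix Fin.castSucc Fin.castSucc).det
      - (M.submatrix Fin.succ Fin.castSucc).det * (M.submatrix Fin.castSucc Fin.succ).det

lemma map_det' {R S : Type*} [CommRing R] [CommRing S] (f : R →+* S) {r : ℕ}
    (M : Matrix (Fin r) (Fin r) R) : (M.map f).det = f M.det := by
  rw [RingHom.map_det f M, RingHom.mapMatrix_apply]

lemma DJstmt_map_iff {R S : Type*} [CommRing R] [CommRing S] (f : R →+* S) {r : ℕ}
    (M : Matrix (Fin (r+2)) (Fin (r+2)) R) : DJstmt (M.map f) ↔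
    f (M.det * (M.submatrix (fun i : Fin r => i.succ.castSucc)
        (fun j : Fin r => j.succ.castSucc)).det)
      = f ((M.submatrix Fin.succ Fin.succ).det * (M.submatrix Fin.castSucc Fin.castSucc).det
        - (M.submatrix Fin.succ Fin.castSucc).det * (M.submatrix Fin.castSucc Fin.succ).det) := by
  unfold DJstmt
  have e : ∀ {s : ℕ} (a b : Fin s → Fin (r+2)),
      ((M.map f).submatrix a b).det = f (M.submatrix a b).det := fun a b => by
    rw [show (M.map ⇑f).submatrix a b = (M.submatrix a b).map ⇑f from rfl, map_det']
  rw [map_det', e, e, e, e, e, ← _root_.map_mul f, ← _root_.map_mul f, ← _root_.map_mul f,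
    ← map_sub f]

theorem desnanot {r : ℕ} (M : Matrix (Fin (r+2)) (Fin (r+2)) ℝ) :
    M.det * (M.submatrix (fun i : Fin r => i.succ.castSucc) (fun j : Fin r => j.succ.castSucc)).det
      = (M.submatrix Fin.succ Fin.succ).det * (M.submatrix Fin.castSucc Fin.castSucc).det
        - (M.submatrix Fin.succ Fin.castSucc).det * (M.submatrix Fin.castSucc Fin.succ).det := by
  classical
  set P : Matrix (Fin (r+2)) (Fin (r+2)) (Polynomial ℝ) := Matrix.charmatrix (-M) with hP
  have hPdet : P.det ≠ 0 := by
    have : P.det = (-M).charpoly := rfl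
    rw [this]
    exact (Matrix.charpoly_monic (-M)).ne_zero
  set K := FractionRing (Polynomial ℝ)
  set φ : Polynomial ℝ →+* K := algebraMap (Polynomial ℝ) K with hφ
  have hinj : Function.Injective φ := IsFractionRing.injective (Polynomial ℝ) K
  have hQdet : (P.map φ).det ≠ 0 := by
    rw [map_det']
    intro h
    exact hPdet (hinj (show φ P.det = φ 0 by rw [h, map_zero]))
  have hDJ_Q : DJstmt (P.map φ) := desnanot_field (P.map φ) hQdet
  have hDJ_P : DJstmt P := hinj ((DJstmt_map_iff φ P).mp hDJ_Q)
  have hPM : P.map (Polynomial.evalRingHom (0:ℝ)) = M := by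
    ext i j
    rw [Matrix.map_apply, hP]
    rcases eq_or_ne i j with rfl | hij
    · rw [Matrix.charmatrix_apply_eq]
      simp
    · rw [Matrix.charmatrix_apply_ne _ _ _ hij]
      simp
  have hfinal : DJstmt (P.map (Polynomial.evalRingHom (0:ℝ))) :=
    (DJstmt_map_iff (Polynomial.evalRingHom (0:ℝ)) P).mpr (congrArg _ hDJ_P)
  rw [hPM] at hfinal
  exact hfinal

end DesnanotTransfer

end AuxDet

section AuxLag

lemma genBinom_zero (x : ℝ) : genBinom x 0 = 1 := by simp [genBinom]

lemma genBinom_pascal (x : ℝ) (k : ℕ) :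
    genBinom (x+1) (k+1) = genBinom x (k+1) + genBinom x k := by
  unfold genBinom
  have h1 : ∏ i ∈ Finset.range (k+1), (x + 1 - (i:ℝ))
      = (x+1) * ∏ i ∈ Finset.range k, (x - (i:ℝ)) := by
    rw [Finset.prod_range_succ',
      Finset.prod_congr rfl (fun i (_ : i ∈ Finset.range k) =>
        (by push_cast; ring : (x + 1 - ((i+1 : ℕ):ℝ)) = x - i))]
    push_cast
    ring
  have h2 : ∏ i ∈ Finset.range (k+1), (x - (i:ℝ))
      = (x - k) * ∏ i ∈ Finset.range k, (x - (i:ℝ)) := by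
    rw [Finset.prod_range_succ, mul_comm]
  rw [h1, h2]
  have hfac : (Nat.factorial (k+1) : ℝ) = (k+1) * Nat.factorial k := by
    rw [Nat.factorial_succ]; push_cast; ring
  rw [hfac]
  have hk : (Nat.factorial k : ℝ) ≠ 0 := Nat.cast_ne_zero.mpr (Nat.factorial_ne_zero k)
  have hk1 : ((k:ℝ)+1) ≠ 0 := by positivity
  field_simp
  ring

lemma lagL_of_neg {n : ℤ} (hn : n < 0) (α : ℝ) : lagL n α = fun _ => 0 := by
  funext z; simp [lagL, hn]

lemma lagL_eq_sum {n : ℤ} (hn : 0 ≤ n) (α : ℝ) :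
    lagL n α = fun z => ∑ k ∈ Finset.range (n.toNat + 1),
      ((-1 : ℝ) ^ k * genBinom ((n : ℝ) + α) (n.toNat - k) / (Nat.factorial k)) * z ^ k := by
  funext z
  rw [lagL, if_neg (not_lt.mpr hn)]
  refine Finset.sum_congr rfl fun k _ => ?_
  ring

lemma differentiable_lagL (n : ℤ) (α : ℝ) : Differentiable ℝ (lagL n α) := by
  rcases lt_or_ge n 0 with hn | hn
  · rw [lagL_of_neg hn]; exact differentiable_const 0
  · rw [lagL_eq_sum hn]
    apply Differentiable.fun_sum
    intro k _
    exact (differentiable_pow k).const_mul _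

lemma deriv_lagL (n : ℤ) (α : ℝ) (z : ℝ) :
    deriv (lagL n α) z = -lagL (n-1) (α+1) z := by
  rcases lt_or_ge n 0 with hn | hn
  · rw [lagL_of_neg hn, lagL_of_neg (by omega) (α+1)]
    simp
  · rw [lagL_eq_sum hn]
    rw [deriv_fun_sum fun k _ => (differentiable_pow k).const_mul _ |>.differentiableAt]
    have hterm : ∀ k ∈ Finset.range (n.toNat + 1),
        deriv (fun z : ℝ => ((-1 : ℝ) ^ k * genBinom ((n : ℝ) + α) (n.toNat - k)
          / (Nat.factorial k)) * z ^ k) z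
        = ((-1 : ℝ) ^ k * genBinom ((n : ℝ) + α) (n.toNat - k) / (Nat.factorial k))
          * (k * z ^ (k-1)) := by
      intro k _
      rw [deriv_const_mul_field, deriv_pow_field]
    rw [Finset.sum_congr rfl hterm]
    rcases eq_or_lt_of_le hn with heq | hpos
    · -- n = 0
      rw [← heq, lagL_of_neg (show (0:ℤ)-1 < 0 by omega)]
      simp
    · -- n ≥ 1
      have hN : n.toNat = (n-1).toNat + 1 := by omega
      rw [hN, Finset.sum_range_succ']
      simp only [Nat.cast_zero, zero_mul, mul_zero, add_zero]
      rw [lagL, if_neg (by omega : ¬ n - 1 < 0)]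
      rw [← Finset.sum_neg_distrib]
      refine Finset.sum_congr rfl fun k hk => ?_
      have hcast : ((n-1 : ℤ) : ℝ) + (α + 1) = (n:ℝ) + α := by push_cast; ring
      rw [hcast]
      have hidx : (n-1).toNat + 1 - (k+1) = (n-1).toNat - k := by omega
      rw [hidx]
      have hk' : (Nat.factorial k : ℝ) ≠ 0 := Nat.cast_ne_zero.mpr (Nat.factorial_ne_zero k)
      have hk1 : ((k:ℝ)+1) ≠ 0 := by positivity
      simp only [Nat.add_sub_cancel]
      push_cast [Nat.factorial_succ]
      field_simp
      ring

lemma iteratedDeriv_lagL (i : ℕ) (n : ℤ) (α : ℝ) :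
    iteratedDeriv i (lagL n α) = fun z => (-1:ℝ)^i * lagL (n - i) (α + i) z := by
  induction i generalizing n α with
  | zero => simp
  | succ i ih =>
      rw [iteratedDeriv_succ, ih]
      funext z
      rw [deriv_const_mul_field]
      rw [deriv_lagL]
      have h1 : n - (i:ℕ) - 1 = n - ((i:ℕ)+1) := by push_cast; ring
      have h2 : α + (i:ℕ) + 1 = α + ((i:ℕ)+1) := by push_cast; ring
      rw [h1, h2]
      push_cast
      ring

lemma lagL_contig (n : ℤ) (α : ℝ) (z : ℝ) :
    lagL n (α + 1) z = lagL n α z + lagL (n-1) (α+1) z := by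
  rcases lt_or_ge n 0 with hn | hn
  · rw [lagL_of_neg hn, lagL_of_neg hn, lagL_of_neg (by omega : n - 1 < 0)]
    norm_num
  · rcases eq_or_lt_of_le hn with heq | hpos
    · rw [← heq, lagL_of_neg (show (0:ℤ)-1 < 0 by omega)]
      simp [lagL, genBinom]
    · have hN : n.toNat = (n-1).toNat + 1 := by omega
      rw [lagL, if_neg (not_lt.mpr hn), lagL, if_neg (not_lt.mpr hn),
        lagL, if_neg (by omega : ¬ n - 1 < 0)]
      have key : ∑ k ∈ Finset.range (n.toNat + 1),
          ((-1 : ℝ) ^ k * genBinom ((n : ℝ) + (α+1)) (n.toNat - k) * z ^ k / (Nat.factorial k)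
          - (-1 : ℝ) ^ k * genBinom ((n : ℝ) + α) (n.toNat - k) * z ^ k / (Nat.factorial k))
          = ∑ k ∈ Finset.range ((n-1).toNat + 1),
            (-1 : ℝ) ^ k * genBinom (((n-1:ℤ) : ℝ) + (α+1)) ((n-1).toNat - k) * z ^ k
              / (Nat.factorial k) := by
        rw [hN, Finset.sum_range_succ]
        have hlast : (-1 : ℝ) ^ ((n-1).toNat + 1)
            * genBinom ((n : ℝ) + (α+1)) ((n-1).toNat + 1 - ((n-1).toNat + 1))
              * z ^ ((n-1).toNat + 1) / (Nat.factorial ((n-1).toNat + 1))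
            - (-1 : ℝ) ^ ((n-1).toNat + 1)
            * genBinom ((n : ℝ) + α) ((n-1).toNat + 1 - ((n-1).toNat + 1))
              * z ^ ((n-1).toNat + 1) / (Nat.factorial ((n-1).toNat + 1)) = 0 := by
          simp only [Nat.sub_self, genBinom_zero]
          ring
        rw [hlast, add_zero]
        refine Finset.sum_congr rfl fun k hk => ?_
        have hk' : k < (n-1).toNat + 1 := Finset.mem_range.mp hk
        have hidx : (n-1).toNat + 1 - k = ((n-1).toNat - k) + 1 := by omega
        rw [hidx]
        have hpas : genBinom ((n:ℝ) + α + 1) (((n-1).toNat - k) + 1)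
            = genBinom ((n:ℝ) + α) (((n-1).toNat - k) + 1) + genBinom ((n:ℝ) + α) ((n-1).toNat - k) :=
          genBinom_pascal _ _
        have hc1 : ((n : ℝ) + (α+1)) = (n:ℝ) + α + 1 := by ring
        have hc2 : (((n-1:ℤ) : ℝ) + (α+1)) = (n:ℝ) + α := by push_cast; ring
        rw [hc1, hc2, hpas]
        ring
      calc (∑ k ∈ Finset.range (n.toNat + 1),
            (-1 : ℝ) ^ k * genBinom ((n : ℝ) + (α+1)) (n.toNat - k) * z ^ k / (Nat.factorial k))
          = (∑ k ∈ Finset.range (n.toNat + 1),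
            (-1 : ℝ) ^ k * genBinom ((n : ℝ) + α) (n.toNat - k) * z ^ k / (Nat.factorial k))
            + ∑ k ∈ Finset.range (n.toNat + 1),
            ((-1 : ℝ) ^ k * genBinom ((n : ℝ) + (α+1)) (n.toNat - k) * z ^ k / (Nat.factorial k)
            - (-1 : ℝ) ^ k * genBinom ((n : ℝ) + α) (n.toNat - k) * z ^ k / (Nat.factorial k)) := by
            rw [← Finset.sum_add_distrib]
            refine Finset.sum_congr rfl fun k _ => by ring
        _ = _ := by rw [key]

lemma lagL_congr {a b : ℤ} {x y : ℝ} (h1 : a = b) (h2 : x = y) (z : ℝ) :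
    lagL a x z = lagL b y z := by rw [h1, h2]

lemma det_sign_conj {s : ℕ} (C : Fin s → Fin s → ℝ) :
    (Matrix.of fun j k : Fin s => (-1:ℝ)^((j:ℕ)+(k:ℕ)) * C j k).det = (Matrix.of C).det := by
  have hmat : (Matrix.of fun j k : Fin s => (-1:ℝ)^((j:ℕ)+(k:ℕ)) * C j k)
      = (Matrix.diagonal fun j : Fin s => (-1:ℝ)^(j:ℕ)) * (Matrix.of C)
        * (Matrix.diagonal fun j : Fin s => (-1:ℝ)^(j:ℕ)) := by
    ext j k
    rw [Matrix.mul_diagonal, Matrix.mul_apply]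
    rw [Finset.sum_eq_single j]
    · rw [Matrix.diagonal_apply_eq, Matrix.of_apply, Matrix.of_apply, pow_add]
      ring
    · intro b _ hb
      rw [Matrix.diagonal_apply_ne _ (Ne.symm hb), zero_mul]
    · intro h; exact absurd (Finset.mem_univ j) h
  rw [hmat, Matrix.det_mul, Matrix.det_mul, Matrix.det_diagonal]
  have hp : (∏ j : Fin s, (-1:ℝ)^(j:ℕ)) * (∏ j : Fin s, (-1:ℝ)^(j:ℕ)) = 1 := by
    rw [← Finset.prod_mul_distrib]
    exact Finset.prod_eq_one fun j _ => by
      rw [← pow_add]; exact Even.neg_one_pow (Even.add_self _)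
  linear_combination ((Matrix.of C).det) * hp

lemma genLag_eq (m' : ℤ) (n' : ℕ) (μ' : ℝ) (z : ℝ) :
    genLag m' n' μ' z = (Matrix.of fun j k : Fin n' =>
      lagL (m' + n' - ((j:ℕ)+(k:ℕ))) (μ' + 1 + ((j:ℕ)+(k:ℕ))) z).det := by
  have h1 : genLag m' n' μ' z = (Matrix.of fun j k : Fin n' =>
      (-1:ℝ)^((j:ℕ)+(k:ℕ)) * lagL (m' + n' - ((j:ℕ)+(k:ℕ))) (μ' + 1 + ((j:ℕ)+(k:ℕ))) z).det := by
    unfold genLag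
    congr 1
    ext j k
    rw [Matrix.of_apply, Matrix.of_apply, iteratedDeriv_lagL]
    push_cast
    ring_nf
  rw [h1, det_sign_conj]

lemma sum_telescope_mixed (G F : ℕ → ℝ) (h : ∀ i, F i = G i + G (i+1)) (c : ℕ) (jv : ℕ) :
    ∑ i ∈ Finset.range (jv+1),
      (-1:ℝ)^(jv - i) * (if i = 0 then G c else F (i-1+c)) = G (jv + c) := by
  induction jv with
  | zero => simp
  | succ jv ih =>
      rw [Finset.sum_range_succ]
      have hstep : ∑ i ∈ Finset.range (jv+1),
          (-1:ℝ)^(jv+1-i) * (if i = 0 then G c else F (i-1+c))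
          = -∑ i ∈ Finset.range (jv+1), (-1:ℝ)^(jv-i) * (if i = 0 then G c else F (i-1+c)) := by
        rw [← Finset.sum_neg_distrib]
        refine Finset.sum_congr rfl fun i hi => ?_
        have hii : jv + 1 - i = (jv - i) + 1 := by
          have := Finset.mem_range.mp hi; omega
        rw [hii, pow_succ]
        ring
      rw [hstep, ih, Nat.sub_self, pow_zero, one_mul, if_neg (Nat.succ_ne_zero jv),
        show jv + 1 - 1 + c = jv + c from by omega, h (jv+c),
        show jv + c + 1 = jv + 1 + c from by omega]
      ring

lemma det_mixed {s : ℕ} (G F : ℕ → ℝ) (h : ∀ i, F i = G i + G (i+1)) (κ : Fin (s+1) → ℕ) :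
    (Matrix.of fun j k : Fin (s+1) => G ((j:ℕ) + κ k)).det
      = (Matrix.of fun j k : Fin (s+1) =>
          if (j:ℕ) = 0 then G (κ k) else F ((j:ℕ) - 1 + κ k)).det := by
  set L : Matrix (Fin (s+1)) (Fin (s+1)) ℝ :=
    Matrix.of (fun j i : Fin (s+1) => if (i:ℕ) ≤ (j:ℕ) then (-1:ℝ)^((j:ℕ)-(i:ℕ)) else 0) with hL
  have hLtri : L.BlockTriangular OrderDual.toDual := by
    intro i j hij
    have : (i:ℕ) < (j:ℕ) := hij
    rw [hL, Matrix.of_apply, if_neg (by omega)]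
  have hLdet : L.det = 1 := by
    rw [Matrix.det_of_lowerTriangular L hLtri]
    exact Finset.prod_eq_one fun j _ => by rw [hL, Matrix.of_apply, if_pos le_rfl, Nat.sub_self, pow_zero]
  have hmul : L * (Matrix.of fun j k : Fin (s+1) =>
      if (j:ℕ) = 0 then G (κ k) else F ((j:ℕ) - 1 + κ k))
      = Matrix.of fun j k : Fin (s+1) => G ((j:ℕ) + κ k) := by
    ext j k
    rw [Matrix.mul_apply, Matrix.of_apply]
    have hconv : ∑ i : Fin (s+1), L j i * (Matrix.of fun j k : Fin (s+1) =>
        if (j:ℕ) = 0 then G (κ k) else F ((j:ℕ) - 1 + κ k)) i k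
        = ∑ i ∈ Finset.range (s+1), (if i ≤ (j:ℕ) then (-1:ℝ)^((j:ℕ)-i) else 0)
            * (if i = 0 then G (κ k) else F (i - 1 + κ k)) := by
      rw [← Fin.sum_univ_eq_sum_range (fun i : ℕ => (if i ≤ (j:ℕ) then (-1:ℝ)^((j:ℕ)-i) else 0)
            * (if i = 0 then G (κ k) else F (i - 1 + κ k))) (s+1)]
      exact Finset.sum_congr rfl fun i _ => rfl
    rw [hconv]
    have hsub : Finset.range ((j:ℕ)+1) ⊆ Finset.range (s+1) :=
      Finset.range_subset_range.mpr (by omega)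
    rw [← Finset.sum_subset hsub (fun x _ hx => by
      have hxj : ¬ x ≤ (j:ℕ) := fun hle => hx (Finset.mem_range.mpr (Nat.lt_succ_of_le hle))
      rw [if_neg hxj, zero_mul])]
    rw [Finset.sum_congr rfl (fun i hi => by
      rw [if_pos (by have := Finset.mem_range.mp hi; omega)])]
    exact sum_telescope_mixed G F h (κ k) (j:ℕ)
  calc (Matrix.of fun j k : Fin (s+1) => G ((j:ℕ) + κ k)).det
      = (L * (Matrix.of fun j k : Fin (s+1) =>
          if (j:ℕ) = 0 then G (κ k) else F ((j:ℕ) - 1 + κ k))).det := by rw [hmul]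
    _ = _ := by rw [Matrix.det_mul, hLdet, one_mul]

end AuxLag

/-- two discrete equations for the generalised Laguerre polynomials. -/
theorem genLag_discrete_equations (m n : ℕ) (hm : 1 ≤ m) (hn : 1 ≤ n) (μ : ℝ) (z : ℝ) :
    genLag (m : ℤ) (n + 1) (μ - 1) z * genLag (m : ℤ) (n - 1) (μ + 1) z
        = genLag ((m : ℤ) + 1) n (μ - 1) z * genLag ((m : ℤ) - 1) n (μ + 1) z
            - (genLag (m : ℤ) n μ z) ^ 2
      ∧ genLag (m : ℤ) (n + 1) (μ - 1) z * genLag ((m : ℤ) + 1) (n - 1) (μ + 1) z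
        = genLag ((m : ℤ) + 1) n (μ - 1) z * genLag (m : ℤ) n (μ + 1) z
            - genLag ((m : ℤ) + 1) n μ z * genLag (m : ℤ) n μ z := by
  obtain ⟨s, rfl⟩ : ∃ s, n = s + 1 := ⟨n-1, by omega⟩
  clear hn
  simp only [Nat.add_sub_cancel]
  set G : ℕ → ℝ := fun i => lagL ((m:ℤ) + s + 2 - i) (μ + i) z with hG
  set Fq : ℕ → ℝ := fun i => lagL ((m:ℤ) + s + 2 - i) (μ + 1 + i) z with hFq
  have hGF : ∀ i, Fq i = G i + G (i+1) := by
    intro i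
    have hc := lagL_contig ((m:ℤ) + s + 2 - i) (μ + i) z
    simp only [hFq, hG]
    rw [show μ + 1 + (i:ℝ) = (μ + i) + 1 from by ring, hc]
    congr 1
    exact lagL_congr (by push_cast; ring) (by push_cast; ring) z
  set M1 : Matrix (Fin (s+2)) (Fin (s+2)) ℝ :=
    Matrix.of (fun j k : Fin (s+2) => G ((j:ℕ)+(k:ℕ))) with hM1
  set M2 : Matrix (Fin (s+2)) (Fin (s+2)) ℝ :=
    Matrix.of (fun j k : Fin (s+2) =>
      if (j:ℕ) = 0 then G ((k:ℕ)) else Fq ((j:ℕ)-1+(k:ℕ))) with hM2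
  have key1 := desnanot M1
  have key2 := desnanot M2
  -- conversions for part (i)
  have hA : M1.det = genLag (m:ℤ) (s+1+1) (μ-1) z := by
    rw [genLag_eq]
    congr 1
    ext j k
    simp only [hM1, Matrix.of_apply, hG]
    exact lagL_congr (by push_cast; ring) (by push_cast; ring) z
  have hI1 : (M1.submatrix (fun i : Fin s => i.succ.castSucc)
      (fun j : Fin s => j.succ.castSucc)).det = genLag (m:ℤ) s (μ+1) z := by
    rw [genLag_eq]
    congr 1
    ext j k
    simp only [hM1, Matrix.submatrix_apply, Matrix.of_apply, hG, Fin.coe_castSucc, Fin.val_succ]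
    exact lagL_congr (by push_cast; ring) (by push_cast; ring) z
  have hB1 : (M1.submatrix Fin.succ Fin.succ).det = genLag ((m:ℤ)-1) (s+1) (μ+1) z := by
    rw [genLag_eq]
    congr 1
    ext j k
    simp only [hM1, Matrix.submatrix_apply, Matrix.of_apply, hG, Fin.val_succ]
    exact lagL_congr (by push_cast; ring) (by push_cast; ring) z
  have hC1 : (M1.submatrix Fin.castSucc Fin.castSucc).det = genLag ((m:ℤ)+1) (s+1) (μ-1) z := by
    rw [genLag_eq]
    congr 1
    ext j k
    simp only [hM1, Matrix.submatrix_apply, Matrix.of_apply, hG, Fin.coe_castSucc]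
    exact lagL_congr (by push_cast; ring) (by push_cast; ring) z
  have hD1 : (M1.submatrix Fin.succ Fin.castSucc).det = genLag (m:ℤ) (s+1) μ z := by
    rw [genLag_eq]
    congr 1
    ext j k
    simp only [hM1, Matrix.submatrix_apply, Matrix.of_apply, hG, Fin.coe_castSucc, Fin.val_succ]
    exact lagL_congr (by push_cast; ring) (by push_cast; ring) z
  have hE1 : (M1.submatrix Fin.castSucc Fin.succ).det = genLag (m:ℤ) (s+1) μ z := by
    rw [genLag_eq]
    congr 1
    ext j k
    simp only [hM1, Matrix.submatrix_apply, Matrix.of_apply, hG, Fin.coe_castSucc, Fin.val_succ]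
    exact lagL_congr (by push_cast; ring) (by push_cast; ring) z
  -- conversions for part (ii)
  have h2A : M2.det = genLag (m:ℤ) (s+1+1) (μ-1) z := by
    rw [hM2, ← det_mixed G Fq hGF (fun k : Fin (s+2) => (k:ℕ))]
    rw [genLag_eq]
    congr 1
    ext j k
    simp only [Matrix.of_apply, hG]
    exact lagL_congr (by push_cast; ring) (by push_cast; ring) z
  have h2I : (M2.submatrix (fun i : Fin s => i.succ.castSucc)
      (fun j : Fin s => j.succ.castSucc)).det = genLag ((m:ℤ)+1) s (μ+1) z := by
    rw [genLag_eq]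
    congr 1
    ext j k
    simp only [hM2, Matrix.submatrix_apply, Matrix.of_apply, Fin.coe_castSucc, Fin.val_succ]
    rw [if_neg (Nat.succ_ne_zero _)]
    simp only [hFq, Nat.add_sub_cancel]
    exact lagL_congr (by push_cast; ring) (by push_cast; ring) z
  have h2B : (M2.submatrix Fin.succ Fin.succ).det = genLag (m:ℤ) (s+1) (μ+1) z := by
    rw [genLag_eq]
    congr 1
    ext j k
    simp only [hM2, Matrix.submatrix_apply, Matrix.of_apply, Fin.val_succ]
    rw [if_neg (Nat.succ_ne_zero _)]
    simp only [hFq, Nat.add_sub_cancel]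
    exact lagL_congr (by push_cast; ring) (by push_cast; ring) z
  have h2D : (M2.submatrix Fin.succ Fin.castSucc).det = genLag ((m:ℤ)+1) (s+1) μ z := by
    rw [genLag_eq]
    congr 1
    ext j k
    simp only [hM2, Matrix.submatrix_apply, Matrix.of_apply, Fin.coe_castSucc, Fin.val_succ]
    rw [if_neg (Nat.succ_ne_zero _)]
    simp only [hFq, Nat.add_sub_cancel]
    exact lagL_congr (by push_cast; ring) (by push_cast; ring) z
  have h2C : (M2.submatrix Fin.castSucc Fin.castSucc).det = genLag ((m:ℤ)+1) (s+1) (μ-1) z := by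
    have e1 : M2.submatrix Fin.castSucc Fin.castSucc
        = Matrix.of (fun j k : Fin (s+1) =>
            if (j:ℕ) = 0 then G ((k:ℕ)) else Fq ((j:ℕ)-1+(k:ℕ))) := by
      ext j k
      simp only [hM2, Matrix.submatrix_apply, Matrix.of_apply, Fin.coe_castSucc]
    rw [e1, ← det_mixed G Fq hGF (fun k : Fin (s+1) => (k:ℕ))]
    rw [genLag_eq]
    congr 1
    ext j k
    simp only [Matrix.of_apply, hG]
    exact lagL_congr (by push_cast; ring) (by push_cast; ring) z
  have h2E : (M2.submatrix Fin.castSucc Fin.succ).det = genLag (m:ℤ) (s+1) μ z := by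
    have e1 : M2.submatrix Fin.castSucc Fin.succ
        = Matrix.of (fun j k : Fin (s+1) =>
            if (j:ℕ) = 0 then G ((k:ℕ)+1) else Fq ((j:ℕ)-1+((k:ℕ)+1))) := by
      ext j k
      simp only [hM2, Matrix.submatrix_apply, Matrix.of_apply, Fin.coe_castSucc, Fin.val_succ]
    rw [e1, ← det_mixed G Fq hGF (fun k : Fin (s+1) => (k:ℕ)+1)]
    rw [genLag_eq]
    congr 1
    ext j k
    simp only [Matrix.of_apply, hG]
    exact lagL_congr (by push_cast; ring) (by push_cast; ring) z
  rw [hA, hI1, hB1, hC1, hD1, hE1] at key1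
  rw [h2A, h2I, h2B, h2C, h2D, h2E] at key2
  constructor
  · linear_combination key1
  · linear_combination key2
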